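/- Let g be an inner product (a symmetric, positive-definite bilinear form) on the real vector space of real n×n matrices such that g(XQ, YQ) = g(X, Y) for every orthogonal matrix Q ∈ O(n) and all n×n matrices X, Y. Then there exists a unique symmetric positive definite n×n matrix R such that g(X, Y) = tr(R X Yᵀ) for all X, Y. Conversely, for every symmetric positive definite R, the form (X, Y) ↦ tr(R X Yᵀ) is an inner product on n×n matrices invariant under right multiplication by O(n). -/

import Mathlib

open Matrix

private lemma stdBM_mul_diagonal {n : ℕ} (i j : Fin n) (d : Fin n → ℝ) :
    Matrix.single i j (1:ℝ) * diagonal d = Matrix.single i j (d j) := by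
  ext a b
  rw [Matrix.mul_diagonal]
  by_cases hb : b = j
  · subst hb; by_cases ha : a = i <;> simp [Matrix.single, ha]
  · simp [Matrix.single, hb, Ne.symm hb]

private lemma stdBM_mul_perm {n : ℕ} (i j : Fin n) (σ : Equiv.Perm (Fin n)) :
    Matrix.single i j (1:ℝ) * σ.toPEquiv.toMatrix = Matrix.single i (σ j) 1 := by
  rw [PEquiv.mul_toMatrix_toPEquiv]
  ext a b
  simp [Matrix.single, Equiv.eq_symm_apply, eq_comm]

private lemma perm_orth {n : ℕ} (σ : Equiv.Perm (Fin n)) :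
    (σ.toPEquiv.toMatrix : Matrix (Fin n) (Fin n) ℝ) * (σ.toPEquiv.toMatrix)ᵀ = 1 := by
  ext r s
  simp only [Matrix.mul_apply, Matrix.transpose_apply, PEquiv.toMatrix_toPEquiv_apply, Pi.single_apply,
    Matrix.one_apply]
  rw [Finset.sum_eq_single (σ r)]
  · simp [Matrix.one_apply, σ.injective.eq_iff, eq_comm]
  · intro c _ hc; simp [Matrix.one_apply, Ne.symm hc, hc]
  · simp

private lemma flip_orth {n : ℕ} (b : Fin n) :
    (diagonal (fun c => if c = b then (-1:ℝ) else 1)) *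
      (diagonal (fun c => if c = b then (-1:ℝ) else 1))ᵀ = 1 := by
  rw [Matrix.diagonal_transpose, Matrix.diagonal_mul_diagonal]
  ext c j
  rcases eq_or_ne c j with rfl | h
  · by_cases hc : c = b <;> simp [hc]
  · simp [Matrix.diagonal_apply_ne _ h, Matrix.one_apply_ne h]

private lemma stdBM_neg {n : ℕ} (i j : Fin n) :
    Matrix.single i j (-1 : ℝ) = -Matrix.single i j 1 := by
  ext a b
  simp [Matrix.single]
  split <;> simp

private lemma trace_triple {n : ℕ} (M X Y : Matrix (Fin n) (Fin n) ℝ) :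
    (M * X * Yᵀ).trace = ∑ a, ∑ j, ∑ i, X i j * (Y a j * M a i) := by
  rw [Matrix.trace]
  simp only [Matrix.diag_apply, Matrix.mul_apply, Matrix.transpose_apply, Finset.sum_mul]
  refine Finset.sum_congr rfl fun a _ => Finset.sum_congr rfl fun j _ =>
    Finset.sum_congr rfl fun i _ => by ring

private lemma trace_MEE {n : ℕ} (M : Matrix (Fin n) (Fin n) ℝ) (i a : Fin n) :
    (M * Matrix.single i i (1:ℝ) * (Matrix.single a i (1:ℝ))ᵀ).trace = M a i := by
  rw [trace_triple]
  rw [Finset.sum_eq_single a]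
  · rw [Finset.sum_eq_single i]
    · rw [Finset.sum_eq_single i]
      · simp
      · intro q _ hq; simp [Ne.symm hq]
      · simp
    · intro j _ hj
      refine Finset.sum_eq_zero fun q _ => ?_
      simp [hj, Ne.symm hj]
    · simp
  · intro p _ hp
    refine Finset.sum_eq_zero fun j _ => Finset.sum_eq_zero fun q _ => ?_
    simp [Ne.symm hp]
  · simp

/-- An inner product `g` on real `n × n` matrices that is invariant under right
multiplication by orthogonal matrices is of the form `g X Y = tr (R * X * Yᵀ)` for a unique
symmetric positive definite matrix `R`; conversely, any such `R` yields an inner product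
invariant under right multiplication by `O(n)`. -/
theorem trR_metrics_characterization (n : ℕ)
    (g : Matrix (Fin n) (Fin n) ℝ →ₗ[ℝ] Matrix (Fin n) (Fin n) ℝ →ₗ[ℝ] ℝ)
    (hsymm : ∀ X Y, g X Y = g Y X)
    (hpos : ∀ X, X ≠ 0 → 0 < g X X)
    (hinv : ∀ Q : Matrix (Fin n) (Fin n) ℝ, Q * Qᵀ = 1 → ∀ X Y, g (X * Q) (Y * Q) = g X Y) :
    (∃! R : Matrix (Fin n) (Fin n) ℝ,
        R.PosDef ∧ ∀ X Y : Matrix (Fin n) (Fin n) ℝ, g X Y = (R * X * Yᵀ).trace) ∧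
    (∀ R : Matrix (Fin n) (Fin n) ℝ, R.PosDef →
      (∀ X Y : Matrix (Fin n) (Fin n) ℝ, (R * X * Yᵀ).trace = (R * Y * Xᵀ).trace) ∧
      (∀ X : Matrix (Fin n) (Fin n) ℝ, X ≠ 0 → 0 < (R * X * Xᵀ).trace) ∧
      (∀ Q : Matrix (Fin n) (Fin n) ℝ, Q * Qᵀ = 1 →
        ∀ X Y : Matrix (Fin n) (Fin n) ℝ,
          (R * (X * Q) * (Y * Q)ᵀ).trace = (R * X * Yᵀ).trace)) := by
  classical
  constructor
  · -- existence and uniqueness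
    set R : Matrix (Fin n) (Fin n) ℝ :=
      Matrix.of fun a i => g (Matrix.single i i 1) (Matrix.single a i 1) with hRdef
    have hzero : ∀ i j a b : Fin n, j ≠ b →
        g (Matrix.single i j 1) (Matrix.single a b 1) = 0 := by
      intro i j a b hjb
      have h := hinv _ (flip_orth b) (Matrix.single i j 1) (Matrix.single a b 1)
      rw [stdBM_mul_diagonal, stdBM_mul_diagonal, if_neg hjb, if_pos rfl, stdBM_neg] at h
      simp only [map_neg] at h
      linarith
    have hswap : ∀ i a j k : Fin n,
        g (Matrix.single i j 1) (Matrix.single a j 1)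
          = g (Matrix.single i k 1) (Matrix.single a k 1) := by
      intro i a j k
      have h := hinv _ (perm_orth (Equiv.swap j k)) (Matrix.single i j 1) (Matrix.single a j 1)
      rw [stdBM_mul_perm, stdBM_mul_perm, Equiv.swap_apply_left] at h
      exact h.symm
    have hEE : ∀ i j a b : Fin n,
        g (Matrix.single i j 1) (Matrix.single a b 1) = if j = b then R a i else 0 := by
      intro i j a b
      split
      · next h => subst h; exact hswap i a j i
      · next h => exact hzero i j a b h
    have hform : ∀ X Y : Matrix (Fin n) (Fin n) ℝ, g X Y = (R * X * Yᵀ).trace := by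
      intro X Y
      have hX : X = ∑ i, ∑ j, (X i j) • Matrix.single i j (1:ℝ) := by
        conv_lhs => rw [matrix_eq_sum_single X]
        refine Finset.sum_congr rfl fun i _ => Finset.sum_congr rfl fun j _ => ?_
        rw [smul_single, smul_eq_mul, mul_one]
      have hY : Y = ∑ a, ∑ b, (Y a b) • Matrix.single a b (1:ℝ) := by
        conv_lhs => rw [matrix_eq_sum_single Y]
        refine Finset.sum_congr rfl fun a _ => Finset.sum_congr rfl fun b _ => ?_
        rw [smul_single, smul_eq_mul, mul_one]
      conv_lhs => rw [hX, hY]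
      rw [trace_triple]
      simp only [map_sum, _root_.map_smul, LinearMap.sum_apply, LinearMap.smul_apply,
        smul_eq_mul, hEE]
      refine Finset.sum_congr rfl fun a _ => Finset.sum_congr rfl fun q _ => ?_
      simp only [mul_ite, mul_zero, Finset.sum_ite_eq', Finset.mem_univ, if_true,
        Finset.mul_sum]
      exact Finset.sum_congr rfl fun i _ => by ring
    have hRT : Rᵀ = R := by
      ext a i
      show R i a = R a i
      rw [hRdef]
      show g (Matrix.single a a 1) (Matrix.single i a 1)
        = g (Matrix.single i i 1) (Matrix.single a i 1)
      rw [hswap a i a i, hsymm]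
    have hRpos : R.PosDef := by
      refine Matrix.PosDef.of_dotProduct_mulVec_pos ?_ ?_
      · ext a i
        rw [Matrix.conjTranspose_apply]
        show star (R i a) = R a i
        rw [star_trivial]
        exact congrFun (congrFun hRT a) i
      · intro x hx
        obtain ⟨p, _⟩ := Function.ne_iff.mp hx
        set X : Matrix (Fin n) (Fin n) ℝ := Matrix.of fun r _ => x r with hXdef
        have hXne : X ≠ 0 := by
          intro h
          apply hx
          ext r
          have := congrFun (congrFun h r) p
          simpa [hXdef] using this
        have hgpos := hpos X hXne
        rw [hform X X, trace_triple] at hgpos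
        set T : ℝ := ∑ a, ∑ i, x i * (x a * R a i) with hTdef
        have hsum : (∑ a, ∑ j, ∑ i, X i j * (X a j * R a i)) = (n : ℝ) * T := by
          rw [Finset.sum_comm]
          have : ∀ j : Fin n, (∑ a, ∑ i, X i j * (X a j * R a i)) = T := by
            intro j
            exact Finset.sum_congr rfl fun a _ => Finset.sum_congr rfl fun i _ => rfl
          rw [Finset.sum_congr rfl (fun j _ => this j)]
          simp [Finset.card_univ]
        rw [hsum] at hgpos
        have hn : (0:ℝ) < n := by
          have := p.pos
          exact_mod_cast this
        have hT : 0 < T := by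
          by_contra hT
          push_neg at hT
          nlinarith
        have : star x ⬝ᵥ R *ᵥ x = T := by
          rw [hTdef]
          simp only [dotProduct, Matrix.mulVec, Pi.star_apply, star_trivial,
            Finset.mul_sum]
          exact Finset.sum_congr rfl fun a _ => Finset.sum_congr rfl fun i _ => by ring
        rw [this]
        exact hT
    refine ⟨R, ⟨hRpos, hform⟩, ?_⟩
    rintro R' ⟨hR'pos, hR'form⟩
    ext a i
    have h1 := hform (Matrix.single i i 1) (Matrix.single a i 1)
    have h2 := hR'form (Matrix.single i i 1) (Matrix.single a i 1)
    rw [trace_MEE] at h1 h2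
    rw [← h2, h1]
  · -- converse
    intro R hR
    have hRT : Rᵀ = R := by
      ext a b
      have := congrFun (congrFun hR.1 a) b
      simpa using this
    refine ⟨?_, ?_, ?_⟩
    · intro X Y
      conv_lhs => rw [← Matrix.trace_transpose]
      rw [Matrix.transpose_mul, Matrix.transpose_mul, Matrix.transpose_transpose, hRT,
        Matrix.mul_assoc, Matrix.trace_mul_comm, Matrix.mul_assoc, Matrix.trace_mul_comm,
        Matrix.mul_assoc]
    · intro X hX
      have key : (R * X * Xᵀ).trace
          = ∑ j, dotProduct (fun r => X r j) (R *ᵥ (fun r => X r j)) := by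
        rw [Matrix.trace]
        simp only [Matrix.diag_apply, Matrix.mul_apply, Matrix.transpose_apply,
          dotProduct, Matrix.mulVec, Finset.sum_mul, Finset.mul_sum]
        rw [Finset.sum_comm]
        refine Finset.sum_congr rfl fun j _ => Finset.sum_congr rfl fun a _ =>
          Finset.sum_congr rfl fun i _ => by ring
      rw [key]
      obtain ⟨c, hc⟩ : ∃ c, (fun r => X r c) ≠ 0 := by
        by_contra h
        push_neg at h
        apply hX
        ext r c
        exact congrFun (h c) r
      refine Finset.sum_pos' (fun j _ => ?_) ⟨c, Finset.mem_univ c, ?_⟩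
      · rcases eq_or_ne (fun r => X r j) 0 with h | h
        · rw [h]; simp
        · exact le_of_lt (by simpa using hR.dotProduct_mulVec_pos h)
      · simpa using hR.dotProduct_mulVec_pos hc
    · intro Q hQ X Y
      rw [Matrix.transpose_mul]
      have : R * (X * Q) * (Qᵀ * Yᵀ) = R * X * (Q * Qᵀ) * Yᵀ := by
        simp only [Matrix.mul_assoc]
      rw [this, hQ, Matrix.mul_one]
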